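/- arXiv:2407.08820 — 2 statements merged into one kernel-verified Lean document; each statement's English description precedes it below -/
import Mathlib

section
/- Let δ ≥ 4 and let G be a finite simple graph such that for every induced subgraph H on the vertex set of an odd cycle of G, |E(H)| = (δ+1)(|V(H)|−1)/2 − 1. Then G has no odd cycle, i.e., G is bipartite. -/
open SimpleGraph

lemma walk_length_one_mem_edges {V : Type*} {G : SimpleGraph V} :
    ∀ {x y : V} (z : G.Walk x y), z.length = 1 → s(x, y) ∈ z.edges := by
  intro x y z hz
  cases z with
  | nil => simp at hz
  | cons h z' =>
    have h0 : z'.length = 0 := by simpa using hz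
    have := Walk.eq_of_length_eq_zero h0
    subst this
    simp

lemma odd_closed_walk_contains_odd_cycle {V : Type*} {G : SimpleGraph V} :
    ∀ (n : ℕ) (u : V) (w : G.Walk u u), w.length = n → Odd n →
      ∃ (x : V) (c : G.Walk x x), c.IsCycle ∧ Odd c.length ∧ c.length ≤ n := by
  classical
  intro n
  induction n using Nat.strong_induction_on with
  | _ n ih =>
  intro u w hlen hodd
  cases w with
  | nil => rw [← hlen] at hodd; simp at hodd
  | @cons _ v _ h p =>
    by_cases hnd : p.support.Nodup
    · have hp : p.IsPath := (Walk.isPath_def p).mpr hnd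
      by_cases he : s(u, v) ∈ p.edges
      · exfalso
        cases p with
        | nil => simp at he
        | @cons _ y _ h' p' =>
          rw [Walk.edges_cons, List.mem_cons] at he
          rcases he with he | he
          · rw [Sym2.eq_iff] at he
            rcases he with ⟨h1, h2⟩ | ⟨h1, h2⟩
            · exact h.ne h1
            · subst h1
              have : p' = Walk.nil := (Walk.isPath_iff_eq_nil (p := p')).mp hp.of_cons
              subst this
              simp at hlen
              subst hlen
              exact (by decide : ¬ Odd 2) hodd
          · have hv : v ∈ p'.support := Walk.snd_mem_support_of_mem_edges p' he
            have := hp.support_nodup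
            simp [Walk.support_cons] at this
            exact this.1 hv
      · exact ⟨u, Walk.cons h p, (Walk.cons_isCycle_iff p h).mpr ⟨hp, he⟩, hlen ▸ hodd,
          le_of_eq hlen⟩
    · obtain ⟨x, hx2⟩ : ∃ x, 2 ≤ p.support.count x := by
        by_contra hcon
        push_neg at hcon
        exact hnd (List.nodup_iff_count_le_one.mpr fun a => by have := hcon a; omega)
      have hx : x ∈ p.support := by
        by_contra hmem
        rw [List.count_eq_zero_of_not_mem hmem] at hx2; omega
      have hspec := p.take_spec hx
      have hcount : (p.takeUntil x hx).support.count x = 1 :=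
        p.count_support_takeUntil_eq_one hx
      have hxr : x ∈ (p.dropUntil x hx).support.tail := by
        have hcnt : p.support.count x
            = (p.takeUntil x hx).support.count x
              + (p.dropUntil x hx).support.tail.count x := by
          conv_lhs => rw [← hspec]
          rw [Walk.support_append, List.count_append]
        rw [hcount] at hcnt
        have : 0 < (p.dropUntil x hx).support.tail.count x := by omega
        exact List.count_pos_iff.mp this
      have hlq := congrArg Walk.length hspec
      rw [Walk.length_append] at hlq
      revert hxr
      generalize hdrop : p.dropUntil x hx = r at hlq
      intro hxr
      cases r with
      | nil => simp at hxr
      | @cons _ y _ h2 r2 =>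
        have hxr2 : x ∈ r2.support := by simpa using hxr
        have hl2 := congrArg Walk.length (r2.take_spec hxr2)
        rw [Walk.length_append] at hl2
        set c0 : G.Walk x x := Walk.cons h2 (r2.takeUntil x hxr2) with hc0
        set w' : G.Walk u u := Walk.cons h ((p.takeUntil x hx).append (r2.dropUntil x hxr2))
          with hw'
        have hlc0 : c0.length = 1 + (r2.takeUntil x hxr2).length := by
          simp [hc0]; omega
        have hlw' : w'.length = 1 + (p.takeUntil x hx).length + (r2.dropUntil x hxr2).length := by
          simp [hw', Walk.length_append]; omega
        have hltot : c0.length + w'.length = n := by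
          have hb : (Walk.cons h2 r2).length = r2.length + 1 := by simp
          simp only [Walk.length_cons] at hlen
          omega
        obtain ⟨k, hk⟩ := hodd
        by_cases hoc : Odd c0.length
        · obtain ⟨z, c, hc, hoddc, hle⟩ := ih c0.length (by omega) x c0 rfl hoc
          exact ⟨z, c, hc, hoddc, by omega⟩
        · rw [Nat.not_odd_iff_even] at hoc
          obtain ⟨m, hm⟩ := hoc
          have how' : Odd w'.length := ⟨k - m, by omega⟩
          obtain ⟨z, c, hc, hoddc, hle⟩ := ih w'.length (by omega) u w' rfl how'
          exact ⟨z, c, hc, hoddc, by omega⟩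

lemma mem_tail_of_mem_support_closed {V : Type*} {G : SimpleGraph V} {u v : V}
    (c : G.Walk u u) (hnil : ¬ c.Nil) (hv : v ∈ c.support) : v ∈ c.support.tail := by
  cases c with
  | nil => simp at hnil
  | cons h p =>
    rw [Walk.support_cons, List.tail_cons]
    rw [Walk.support_cons, List.mem_cons] at hv
    rcases hv with rfl | hv
    · exact p.end_mem_support
    · exact hv

lemma ncard_support_of_cycle {V : Type*} {G : SimpleGraph V} {u : V}
    (c : G.Walk u u) (hc : c.IsCycle) :
    ({v | v ∈ c.support} : Set V).ncard = c.length := by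
  classical
  cases c with
  | nil => exact absurd hc Walk.IsCycle.not_of_nil
  | cons h p =>
    have hnd : p.support.Nodup := by
      have := ((Walk.isCycle_def _).mp hc).2.2
      simpa [Walk.support_cons] using this
    have hset : {v | v ∈ (Walk.cons h p).support} = (↑p.support.toFinset : Set _) := by
      ext w
      simp only [Walk.support_cons, List.mem_cons, Set.mem_setOf_eq, List.coe_toFinset]
      constructor
      · rintro (rfl | hw)
        · exact p.end_mem_support
        · exact hw
      · exact Or.inr
    rw [hset, Set.ncard_coe_finset, List.toFinset_card_of_nodup hnd, Walk.length_support]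
    simp


theorem bipartite_of_odd_cycle_edge_count {V : Type*} [Fintype V]
    (G : SimpleGraph V) (δ : ℕ) (hδ : 4 ≤ δ)
    (hE : ∀ (u : V) (c : G.Walk u u), c.IsCycle → Odd c.length →
      2 * (({e ∈ G.edgeSet | ∀ v ∈ e, v ∈ c.support} : Set (Sym2 V)).ncard + 1) =
        (δ + 1) * (({v | v ∈ c.support} : Set V).ncard - 1)) :
    (∀ (u : V) (c : G.Walk u u), c.IsCycle → ¬ Odd c.length) ∧ G.Colorable 2 := by
  classical
  have part1 : ∀ (u : V) (c : G.Walk u u), c.IsCycle → ¬ Odd c.length := by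
    by_contra hcon
    push_neg at hcon
    obtain ⟨u₀, c₀, hc₀, hodd₀⟩ := hcon
    set S : Set ℕ := {n | ∃ (u : V) (c : G.Walk u u), c.IsCycle ∧ Odd c.length ∧ c.length = n}
      with hS
    have hne : S.Nonempty := ⟨c₀.length, u₀, c₀, hc₀, hodd₀, rfl⟩
    obtain ⟨u, c, hc, hodd, hlen⟩ := Nat.sInf_mem hne
    set L := c.length with hL
    have hmin : ∀ m ∈ S, sInf S ≤ m := fun m hm => Nat.sInf_le hm
    -- vertex count
    have hVc : ({v | v ∈ c.support} : Set V).ncard = L := ncard_support_of_cycle c hc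
    -- edge count facts
    set Ec : Set (Sym2 V) := {e ∈ G.edgeSet | ∀ v ∈ e, v ∈ c.support} with hEc
    set m := Ec.ncard with hm
    have hEq : 2 * (m + 1) = (δ + 1) * (L - 1) := by
      have := hE u c hc hodd
      rwa [hVc] at this
    have hL3 : 3 ≤ L := hc.three_le_length
    have hsub : (↑c.edges.toFinset : Set (Sym2 V)) ⊆ Ec := by
      intro e he
      rw [Finset.mem_coe, List.mem_toFinset] at he
      refine ⟨c.edges_subset_edgeSet he, ?_⟩
      induction e using Sym2.ind with
      | _ x y =>
        intro v hv
        rw [Sym2.mem_iff] at hv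
        rcases hv with rfl | rfl
        · exact c.fst_mem_support_of_mem_edges he
        · exact c.snd_mem_support_of_mem_edges he
    have hcard : c.edges.toFinset.card = L := by
      rw [List.toFinset_card_of_nodup ((Walk.isTrail_def _).mp
        ((Walk.isCycle_def _).mp hc).1), Walk.length_edges]
    have hmub : (δ + 1) * (L - 1) ≥ 5 * (L - 1) :=
      Nat.mul_le_mul_right _ (by omega)
    have hLm : L < m := by
      have hle : L ≤ m := by
        calc L = c.edges.toFinset.card := hcard.symm
        _ = (↑c.edges.toFinset : Set (Sym2 V)).ncard := (Set.ncard_coe_finset _).symm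
        _ ≤ Ec.ncard := Set.ncard_le_ncard hsub (Set.toFinite Ec)
      omega
    obtain ⟨e, heEc, heF⟩ : ∃ e ∈ Ec, e ∉ (↑c.edges.toFinset : Set (Sym2 V)) := by
      by_contra hss
      push_neg at hss
      have := Set.ncard_le_ncard hss (Finset.finite_toSet _)
      rw [Set.ncard_coe_finset, hcard] at this
      omega
    induction e using Sym2.ind with
    | _ a b =>
    have hadj : G.Adj a b := heEc.1
    have haS : a ∈ c.support := heEc.2 a (Sym2.mem_mk_left a b)
    have hbS : b ∈ c.support := heEc.2 b (Sym2.mem_mk_right a b)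
    have hne2 : s(a, b) ∉ c.edges := by simpa using heF
    -- rotate the cycle at a
    set C' := c.rotate a haS with hC'def
    have hC'cyc : C'.IsCycle := hc.rotate haS
    have hC'len : C'.length = L := by
      have h := congrArg Walk.length (c.take_spec haS)
      rw [Walk.length_append] at h
      simp only [hC'def, Walk.rotate, Walk.length_append]
      omega
    have hbC' : b ∈ C'.support := by
      refine List.mem_of_mem_tail ((Walk.support_rotate c a haS).mem_iff.mpr ?_)
      exact mem_tail_of_mem_support_closed c hc.not_nil hbS
    have hchord : s(a, b) ∉ C'.edges := by
      intro hmem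
      exact hne2 ((c.rotate_edges a haS).mem_iff.mp hmem)
    set p1 := C'.takeUntil b hbC' with hp1
    set p2 := C'.dropUntil b hbC' with hp2
    have hsum : p1.length + p2.length = L := by
      have h := congrArg Walk.length (C'.take_spec hbC')
      rw [Walk.length_append] at h
      rw [hp1, hp2]
      omega
    have hedges : s(a, b) ∉ p1.edges ∧ s(a, b) ∉ p2.edges := by
      constructor <;> intro hmem <;> apply hchord <;>
        rw [← C'.take_spec hbC', Walk.edges_append, List.mem_append]
      · exact Or.inl hmem
      · exact Or.inr hmem
    have hfin : ∃ (z : V) (w : G.Walk z z), Odd w.length ∧ w.length < L := by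
      by_cases hpar : Odd p1.length
      ·
        refine ⟨a, Walk.cons hadj p2, ?_, ?_⟩
        · rw [Walk.length_cons]
          obtain ⟨k, hk⟩ := hodd
          rw [Nat.odd_add_one, Nat.not_odd_iff_even]
          obtain ⟨j, hj⟩ := hpar
          exact ⟨(k - j : ℕ), by omega⟩
        · rw [Walk.length_cons]
          have h0 : p1.length ≠ 0 := by
            intro h0
            exact hadj.ne (Walk.eq_of_length_eq_zero h0)
          have h1 : p1.length ≠ 1 := by
            intro h1
            exact hedges.1 (walk_length_one_mem_edges p1 h1)
          omega
      · refine ⟨a, p1.append (Walk.cons hadj.symm Walk.nil), ?_, ?_⟩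
        · rw [Walk.length_append, Walk.length_cons, Walk.length_nil]
          rw [Nat.not_odd_iff_even] at hpar
          obtain ⟨j, hj⟩ := hpar
          exact ⟨j, by omega⟩
        · rw [Walk.length_append, Walk.length_cons, Walk.length_nil]
          have h0 : p2.length ≠ 0 := by
            intro h0
            have h1 : p1.length = L := by omega
            exact hpar (by rw [h1]; exact hodd)
          have h1 : p2.length ≠ 1 := by
            intro h1
            apply hedges.2
            have := walk_length_one_mem_edges p2 h1
            rwa [Sym2.eq_swap] at this
          omega
    obtain ⟨z, w, hwodd, hwlt⟩ := hfin
    obtain ⟨z', cyc, hcyc, hcycodd, hcycle⟩ :=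
      odd_closed_walk_contains_odd_cycle w.length z w rfl hwodd
    have : sInf S ≤ cyc.length := hmin _ ⟨z', cyc, hcyc, hcycodd, rfl⟩
    omega
  refine ⟨part1, ?_⟩
  have noodd : ∀ (z : V) (w : G.Walk z z), ¬ Odd w.length := by
    intro z w how
    obtain ⟨x, cyc, hcyc, hco, _⟩ := odd_closed_walk_contains_odd_cycle w.length z w rfl how
    exact part1 x cyc hcyc hco
  let rep : V → V := fun v => (G.connectedComponentMk v).out
  have hrep : ∀ v, G.Reachable (rep v) v := fun v =>
    ConnectedComponent.exact (Quot.out_eq (G.connectedComponentMk v))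
  have key : ∀ {x y : V}, G.Adj x y →
      (Odd (G.dist (rep x) x) ↔ ¬ Odd (G.dist (rep y) y)) := by
    intro x y hxy
    have hcomp : rep x = rep y := by
      show (G.connectedComponentMk x).out = (G.connectedComponentMk y).out
      rw [ConnectedComponent.connectedComponentMk_eq_of_adj hxy]
    obtain ⟨p, hp⟩ := (hrep x).exists_walk_length_eq_dist
    obtain ⟨q, hq⟩ := (hrep y).exists_walk_length_eq_dist
    set w : G.Walk x x :=
      p.reverse.append ((q.copy hcomp.symm rfl).append (Walk.cons hxy.symm Walk.nil)) with hw
    have hlen : w.length = G.dist (rep x) x + G.dist (rep y) y + 1 := by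
      simp only [hw, Walk.length_append, Walk.length_reverse, Walk.length_copy,
        Walk.length_cons, Walk.length_nil, hp, hq]
      omega
    have h2 := noodd x w
    rw [hlen] at h2
    constructor
    · intro h1 h3
      obtain ⟨i, hi⟩ := h1
      obtain ⟨j, hj⟩ := h3
      exact h2 ⟨i + j + 1, by omega⟩
    · intro h1
      rcases Nat.even_or_odd (G.dist (rep x) x) with he | ho
      · rcases Nat.even_or_odd (G.dist (rep y) y) with he2 | ho2
        · exfalso
          obtain ⟨i, hi⟩ := he
          obtain ⟨j, hj⟩ := he2
          exact h2 ⟨i + j, by omega⟩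
        · exact absurd ho2 h1
      · exact ho
  refine ⟨Coloring.mk (fun v => if Odd (G.dist (rep v) v) then (1 : Fin 2) else 0) ?_⟩
  intro a b hab hcol
  have hk := key hab
  by_cases hda : Odd (G.dist (rep a) a) <;> by_cases hdb : Odd (G.dist (rep b) b) <;>
    simp [hda, hdb] at hcol hk
end

section
/- In the wheel graph W_n, the central vertex v together with any set of consecutive outer-cycle vertices induces a 2-connected subgraph (a 'slice'), and such a slice is factor-critical if and only if it has an odd number of vertices. -/
open SimpleGraph

/-- The wheel graph with outer cycle on `m` vertices: the vertex `none` is the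
central vertex, adjacent to every outer vertex, and the outer vertices
`some a` form the cycle graph on `m` vertices. The wheel graph `W_n` on `n`
vertices is `wheelGraph (n - 1)`. -/
def wheelGraph (m : ℕ) : SimpleGraph (Option (Fin m)) where
  Adj x y :=
    match x, y with
    | none, none => False
    | none, some _ => True
    | some _, none => True
    | some a, some b => (cycleGraph m).Adj a b
  symm := by
    constructor
    intro x y h
    match x, y with
    | none, some _ => trivial
    | some _, none => trivial
    | some a, some b => exact h.symm
  loopless := by
    constructor
    intro x h
    match x with
    | none => exact h
    | some a => exact (cycleGraph m).irrefl h

/-- A graph is 2-connected if it is connected and has no cut vertex, i.e.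
deleting any vertex leaves a (pre)connected graph. -/
def IsTwoConnected {V : Type*} (G : SimpleGraph V) : Prop :=
  G.Connected ∧ ∀ u : V, (G.induce {v | v ≠ u}).Preconnected

/-- A graph is factor-critical if deleting any vertex leaves a graph with a
perfect matching. -/
def IsFactorCritical {V : Type*} (G : SimpleGraph V) : Prop :=
  ∀ u : V, ∃ M : (G.induce {v | v ≠ u}).Subgraph, M.IsPerfectMatching

/-- The set of `k` consecutive outer-cycle vertices starting at `i`. -/
def consec {m : ℕ} (i : Fin m) (k : ℕ) : Set (Fin m) :=
  {x | ∃ j < k, (x : ℕ) = ((i : ℕ) + j) % m}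


lemma pm_of_involutive {V : Type*} (G : SimpleGraph V) (f : V → V)
    (hinv : Function.Involutive f) (hadj : ∀ v, G.Adj v (f v)) :
    ∃ M : G.Subgraph, M.IsPerfectMatching := by
  refine ⟨⟨Set.univ, fun a b => f a = b, ?_, fun _ => Set.mem_univ _, ?_⟩,
    ?_, fun v => Set.mem_univ _⟩
  · rintro v w rfl; exact hadj v
  · constructor; rintro a b rfl; exact hinv a
  · intro v _
    exact ⟨f v, rfl, fun y hy => Eq.symm hy⟩

lemma pm_of_iso {V W : Type*} {G : SimpleGraph V} {H : SimpleGraph W} (e : G ≃g H)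
    (h : ∃ M : G.Subgraph, M.IsPerfectMatching) :
    ∃ M : H.Subgraph, M.IsPerfectMatching := by
  obtain ⟨M, hM, hS⟩ := h
  refine ⟨⟨Set.univ, fun a b => M.Adj (e.symm a) (e.symm b), ?_,
    fun _ => Set.mem_univ _, ⟨fun a b hab => hab.symm⟩⟩, ?_, fun v => Set.mem_univ _⟩
  · intro a b hab
    exact e.symm.map_rel_iff.mp (M.adj_sub hab)
  · intro v _
    obtain ⟨w, hw, hu⟩ := hM (hS (e.symm v))
    refine ⟨e w, by simpa using hw, fun y hy => ?_⟩
    have := hu (e.symm y) hy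
    have : y = e w := by
      apply_fun e.symm using e.symm.injective
      simpa using this
    exact this

def deleteIso {V W : Type*} {G : SimpleGraph V} {H : SimpleGraph W} (e : G ≃g H) (u : V) :
    G.induce {v | v ≠ u} ≃g H.induce {v | v ≠ e u} where
  toEquiv := e.toEquiv.subtypeEquiv (fun a => by
    simp only [Set.mem_setOf_eq, ne_eq]
    exact not_congr ⟨fun h => h ▸ rfl, fun h => e.injective h⟩)
  map_rel_iff' := by
    intro a b
    exact e.map_rel_iff


/-- The fan graph: hub `none` joined to a path on `Fin k`. -/
def fan (k : ℕ) : SimpleGraph (Option (Fin k)) where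
  Adj x y :=
    match x, y with
    | none, none => False
    | none, some _ => True
    | some _, none => True
    | some a, some b => (pathGraph k).Adj a b
  symm := by
    constructor
    intro x y h
    match x, y with
    | none, some _ => trivial
    | some _, none => trivial
    | some a, some b => exact h.symm
  loopless := by
    constructor
    intro x h
    match x with
    | none => exact h
    | some a => exact (pathGraph k).irrefl h

lemma fan_adj_some_some {k : ℕ} {a b : Fin k} :
    (fan k).Adj (some a) (some b) ↔ (pathGraph k).Adj a b := Iff.rfl

def fanSomeEquiv (k : ℕ) :
    Fin k ≃ {x : Option (Fin k) // x ∈ {v | v ≠ (none : Option (Fin k))}} where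
  toFun a := ⟨some a, by simp⟩
  invFun x := x.val.get (by
    obtain ⟨v, hv⟩ := x
    cases v with
    | none => exact absurd rfl hv
    | some a => simp)
  left_inv a := rfl
  right_inv x := by
    obtain ⟨v, hv⟩ := x
    cases v with
    | none => exact absurd rfl hv
    | some a => rfl

def fanDelHubIso (k : ℕ) :
    pathGraph k ≃g (fan k).induce {v | v ≠ (none : Option (Fin k))} where
  toEquiv := fanSomeEquiv k
  map_rel_iff' := Iff.rfl

lemma fan_twoConnected (k : ℕ) (hk : 1 ≤ k) : IsTwoConnected (fan k) := by
  constructor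
  · rw [connected_iff_exists_forall_reachable]
    refine ⟨none, fun w => ?_⟩
    cases w with
    | none => exact Reachable.refl _
    | some a => exact Adj.reachable trivial
  · intro u
    cases u with
    | none =>
      rw [← (fanDelHubIso k).preconnected_iff]
      exact pathGraph_preconnected k
    | some t =>
      intro x y
      have hub : ∀ z : {v : Option (Fin k) // v ∈ {v | v ≠ some t}},
          ((fan k).induce {v | v ≠ some t}).Reachable z ⟨none, by simp⟩ := by
        rintro ⟨z, hz⟩
        cases z with
        | none => exact Reachable.refl _
        | some a => exact Adj.reachable trivial
      exact (hub x).trans (hub y).symm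

/-- The basic pairing on naturals: `2j ↔ 2j+1`. -/
def npair (a : ℕ) : ℕ := if a % 2 = 0 then a + 1 else a - 1

lemma npair_even {b : ℕ} (hb : b % 2 = 0) : npair b = b + 1 := if_pos hb

lemma npair_odd {b : ℕ} (hb : b % 2 = 1) : npair b = b - 1 := if_neg (by omega)

lemma npair_invol : Function.Involutive npair := by
  intro a
  rcases Nat.even_or_odd a with h | h
  · have h2 : a % 2 = 0 := Nat.even_iff.mp h
    rw [npair_even h2, npair_odd (by omega)]
    omega
  · have h2 : a % 2 = 1 := Nat.odd_iff.mp h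
    rw [npair_odd h2, npair_even (by omega)]
    omega

lemma npair_lt {k a : ℕ} (hk : Even k) (ha : a < k) : npair a < k := by
  unfold npair
  rcases Nat.even_iff.mp hk with hk2
  split <;> omega

lemma npair_ne (a : ℕ) : npair a ≠ a := by
  unfold npair; split <;> omega

lemma fan_adj_npair {k : ℕ} (a : Fin k) (h : npair (a : ℕ) < k) :
    (fan k).Adj (some a) (some ⟨npair a, h⟩) := by
  rw [fan_adj_some_some, pathGraph_adj]
  show (a : ℕ) + 1 = npair (a : ℕ) ∨ npair (a : ℕ) + 1 = (a : ℕ)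
  rcases Nat.even_or_odd (a : ℕ) with h2 | h2
  · left
    rw [npair_even (Nat.even_iff.mp h2)]
  · right
    have h3 := Nat.odd_iff.mp h2
    rw [npair_odd h3]
    omega

def fanMatch {k : ℕ} (hk : Even k) (t : Fin k) : Option (Fin k) → Option (Fin k)
  | none => some ⟨npair t, npair_lt hk t.isLt⟩
  | some a => if (a : ℕ) = npair (t : ℕ) then none else some ⟨npair a, npair_lt hk a.isLt⟩

lemma fanMatch_ne {k : ℕ} (hk : Even k) (t : Fin k) {x : Option (Fin k)}
    (hx : x ≠ some t) : fanMatch hk t x ≠ some t := by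
  cases x with
  | none =>
    simp only [fanMatch, ne_eq, Option.some.injEq]
    intro h
    exact npair_ne t (congrArg Fin.val h)
  | some a =>
    simp only [fanMatch]
    split
    · simp
    · rename_i hc
      simp only [ne_eq, Option.some.injEq]
      intro h
      apply hc
      have : npair (a : ℕ) = (t : ℕ) := congrArg Fin.val h
      rw [← this, npair_invol]

lemma fanMatch_invol {k : ℕ} (hk : Even k) (t : Fin k) {x : Option (Fin k)}
    (hx : x ≠ some t) : fanMatch hk t (fanMatch hk t x) = x := by
  cases x with
  | none => simp [fanMatch]
  | some a =>
    by_cases hc : (a : ℕ) = npair (t : ℕ)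
    · simp only [fanMatch, if_pos hc, Option.some.injEq]
      exact Fin.ext hc.symm
    · have ha : (a : ℕ) ≠ (t : ℕ) := fun h => hx (by exact congrArg some (Fin.ext h))
      have hc2 : npair (a : ℕ) ≠ npair (t : ℕ) :=
        fun h => ha (npair_invol.injective h)
      simp only [fanMatch, if_neg hc, if_neg hc2, Option.some.injEq]
      exact Fin.ext (npair_invol a)

lemma fanMatch_adj {k : ℕ} (hk : Even k) (t : Fin k) (x : Option (Fin k)) :
    (fan k).Adj x (fanMatch hk t x) := by
  cases x with
  | none => trivial
  | some a =>
    simp only [fanMatch]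
    split
    · trivial
    · exact fan_adj_npair a _

lemma fan_factorCritical {k : ℕ} (hk : Even k) : IsFactorCritical (fan k) := by
  intro u
  cases u with
  | none =>
    apply pm_of_involutive _ (fun x =>
      match x with
      | ⟨none, h⟩ => absurd rfl h
      | ⟨some a, _⟩ => ⟨some ⟨npair a, npair_lt hk a.isLt⟩, by simp⟩)
    · rintro ⟨x, hx⟩
      cases x with
      | none => exact absurd rfl hx
      | some a =>
        apply Subtype.ext
        simp only [Option.some.injEq]
        exact Fin.ext (npair_invol a)
    · rintro ⟨x, hx⟩
      cases x with
      | none => exact absurd rfl hx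
      | some a => exact fan_adj_npair a _
  | some t =>
    apply pm_of_involutive _ (fun x => ⟨fanMatch hk t x.val, fanMatch_ne hk t x.prop⟩)
    · intro x
      exact Subtype.ext (fanMatch_invol hk t x.prop)
    · intro x
      exact fanMatch_adj hk t x.val


section
variable {m : ℕ} (hm : 3 ≤ m) (i : Fin m)

lemma mod_inj {x y : ℕ} (hx : x < m) (hy : y < m)
    (h : ((i:ℕ) + x) % m = ((i:ℕ) + y) % m) : x = y := by
  have := Nat.ModEq.add_left_cancel' (i : ℕ) (h : ((i:ℕ)+x) ≡ ((i:ℕ)+y) [MOD m])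
  rwa [Nat.ModEq, Nat.mod_eq_of_lt hx, Nat.mod_eq_of_lt hy] at this

lemma pos_eq (j : ℕ) (hj : j < m) :
    (((i:ℕ) + j) % m + m - (i:ℕ)) % m = j := by
  have hi : (i : ℕ) < m := i.isLt
  have h1 : ((i:ℕ) + j) % m + m - (i:ℕ) = ((i:ℕ) + j) % m + (m - (i:ℕ)) := by omega
  rw [h1, Nat.mod_add_mod]
  have h2 : (i:ℕ) + j + (m - (i:ℕ)) = j + m := by omega
  rw [h2, Nat.add_mod_right, Nat.mod_eq_of_lt hj]

lemma cyc_iff {x y : Fin m} {j1 j2 : ℕ} (h1 : j1 < m) (h2 : j2 + 1 < m)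
    (hx : (x:ℕ) = ((i:ℕ) + j1) % m) (hy : (y:ℕ) = ((i:ℕ) + j2) % m) :
    (x - y).val = 1 ↔ j1 = j2 + 1 := by
  haveI : NeZero m := ⟨by omega⟩
  have hone : ((1 : Fin m) : ℕ) = 1 := by
    rw [Fin.val_one']
    exact Nat.mod_eq_of_lt (by omega)
  have hsub : (x - y).val = 1 ↔ x = 1 + y := by
    rw [show ((x - y).val = 1 ↔ x - y = 1) from by rw [Fin.ext_iff, hone],
      sub_eq_iff_eq_add, add_comm]
  rw [hsub, Fin.ext_iff, hx]
  have hval : ((1 + y : Fin m) : ℕ) = ((i:ℕ) + (j2 + 1)) % m := by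
    rw [Fin.val_add, hone, hy, Nat.add_comm 1, Nat.mod_add_mod, Nat.add_assoc]
  rw [hval]
  exact ⟨fun h => mod_inj i h1 h2 h, fun h => by rw [h]⟩

end

section
variable {m : ℕ} (i : Fin m) (k : ℕ)

lemma mem_slice_some {a : Fin m} (h : some a ∈ insert none (some '' consec i k)) :
    ∃ j < k, (a : ℕ) = ((i : ℕ) + j) % m := by
  rcases Set.mem_insert_iff.mp h with h | h
  · exact absurd h (by simp)
  · obtain ⟨b, hb, hba⟩ := h
    obtain rfl : b = a := Option.some_injective _ hba
    exact hb

lemma slice_pos_lt {a : Fin m} (hk2 : k < m)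
    (h : ∃ j < k, (a : ℕ) = ((i : ℕ) + j) % m) :
    ((a : ℕ) + m - (i : ℕ)) % m < k := by
  obtain ⟨j, hj, hv⟩ := h
  rw [hv, pos_eq i j (by omega)]
  exact hj

def sliceEquiv (hk2 : k < m) :
    {x : Option (Fin m) // x ∈ insert none (some '' consec i k)} ≃ Option (Fin k) where
  toFun x :=
    match x with
    | ⟨none, _⟩ => none
    | ⟨some a, h⟩ => some ⟨((a : ℕ) + m - (i : ℕ)) % m,
        slice_pos_lt i k hk2 (mem_slice_some i k h)⟩
  invFun y :=
    match y with
    | none => ⟨none, Set.mem_insert _ _⟩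
    | some j => ⟨some ⟨((i : ℕ) + j) % m, Nat.mod_lt _ i.pos⟩,
        Set.mem_insert_of_mem _ ⟨_, ⟨j, j.isLt, rfl⟩, rfl⟩⟩
  left_inv := by
    rintro ⟨x, hx⟩
    cases x with
    | none => rfl
    | some a =>
      obtain ⟨j, hj, hval⟩ := mem_slice_some i k hx
      apply Subtype.ext
      refine congrArg some (Fin.ext ?_)
      show ((i : ℕ) + (((a : ℕ) + m - (i : ℕ)) % m)) % m = (a : ℕ)
      rw [hval, pos_eq i j (by omega)]
  right_inv := by
    rintro y
    cases y with
    | none => rfl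
    | some j =>
      refine congrArg some (Fin.ext ?_)
      show ((((i : ℕ) + j) % m) + m - (i : ℕ)) % m = (j : ℕ)
      exact pos_eq i j (lt_trans j.isLt hk2)

def sliceIso (hm : 3 ≤ m) (hk2 : k < m) :
    (wheelGraph m).induce (insert none (some '' consec i k)) ≃g fan k where
  toEquiv := sliceEquiv i k hk2
  map_rel_iff' := by
    rintro ⟨x, hx⟩ ⟨y, hy⟩
    cases x with
    | none =>
      cases y with
      | none => exact Iff.rfl
      | some b => exact Iff.rfl
    | some a =>
      cases y with
      | none => exact Iff.rfl
      | some b =>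
        obtain ⟨j1, hj1, hv1⟩ := mem_slice_some i k hx
        obtain ⟨j2, hj2, hv2⟩ := mem_slice_some i k hy
        have pa : ((a : ℕ) + m - (i : ℕ)) % m = j1 := by
          rw [hv1]; exact pos_eq i j1 (by omega)
        have pb : ((b : ℕ) + m - (i : ℕ)) % m = j2 := by
          rw [hv2]; exact pos_eq i j2 (by omega)
        rw [show (((wheelGraph m).induce (insert none (some '' consec i k))).Adj
            ⟨some a, hx⟩ ⟨some b, hy⟩) ↔ (cycleGraph m).Adj a b from Iff.rfl]
        rw [show ((fan k).Adj (sliceEquiv i k hk2 ⟨some a, hx⟩) (sliceEquiv i k hk2 ⟨some b, hy⟩))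
            ↔ ((a : ℕ) + m - (i : ℕ)) % m + 1 = ((b : ℕ) + m - (i : ℕ)) % m ∨
              ((b : ℕ) + m - (i : ℕ)) % m + 1 = ((a : ℕ) + m - (i : ℕ)) % m from pathGraph_adj]
        rw [cycleGraph_adj', cyc_iff i (by omega) (by omega : j2 + 1 < m) hv1 hv2,
          cyc_iff i (by omega) (by omega : j1 + 1 < m) hv2 hv1, pa, pb]
        omega

end

lemma isTwoConnected_of_iso {V W : Type*} {G : SimpleGraph V} {H : SimpleGraph W}
    (e : G ≃g H) (h : IsTwoConnected G) : IsTwoConnected H := by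
  obtain ⟨hc, hd⟩ := h
  constructor
  · haveI := hc.nonempty.map e
    exact ⟨e.preconnected_iff.mp hc.preconnected⟩
  · intro u
    have h1 := (deleteIso e (e.symm u)).preconnected_iff.mp (hd (e.symm u))
    have hs : e (e.symm u) = u := e.apply_symm_apply u
    rw [← hs]
    exact h1

lemma isFactorCritical_of_iso {V W : Type*} {G : SimpleGraph V} {H : SimpleGraph W}
    (e : G ≃g H) (h : IsFactorCritical G) : IsFactorCritical H := by
  intro u
  have h1 := pm_of_iso (deleteIso e (e.symm u)) (h (e.symm u))
  have hs : e (e.symm u) = u := e.apply_symm_apply u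
  rw [← hs]
  exact h1

theorem wheelGraph_slices (m : ℕ) (hm : 3 ≤ m) (i : Fin m) (k : ℕ)
    (hk1 : 1 ≤ k) (hk2 : k < m) :
    IsTwoConnected ((wheelGraph m).induce (insert none (some '' consec i k))) ∧
    (IsFactorCritical ((wheelGraph m).induce (insert none (some '' consec i k))) ↔
      Odd (insert none (some '' consec i k) : Set (Option (Fin m))).ncard) := by
  have iso := sliceIso i k hm hk2
  constructor
  · exact isTwoConnected_of_iso iso.symm (fan_twoConnected k hk1)
  · have hcard : (insert none (some '' consec i k) : Set (Option (Fin m))).ncard = k + 1 := by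
      rw [← Nat.card_coe_set_eq, Nat.card_congr (sliceEquiv i k hk2)]
      simp [Nat.card_eq_fintype_card]
    rw [hcard, Nat.odd_add_one, Nat.not_odd_iff_even]
    constructor
    · intro hfc
      have hfcf : IsFactorCritical (fan k) := isFactorCritical_of_iso iso hfc
      obtain ⟨M, hM⟩ := hfcf none
      have he := hM.even_card
      have hcd : Fintype.card {x : Option (Fin k) // x ∈ {v | v ≠ (none : Option (Fin k))}} = k := by
        exact (Fintype.card_congr (fanSomeEquiv k).symm).trans (Fintype.card_fin k)
      rwa [hcd] at he
    · intro hk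
      exact isFactorCritical_of_iso iso.symm (fan_factorCritical hk)
end
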